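/- For every integer ℓ ≥ 1 and all real numbers x and y, one has y·Σ_{h=1}^{ℓ} N(ℓ,h)·(x·y)^h·(1+y)^{2ℓ−h} = x·y²·(1+y)·Σ_{p=0}^{⌊(ℓ−1)/2⌋} M(ℓ−1,p)·(x·y·(1+y)³)^p·((1+y)·(1+y+x·y))^{ℓ−2p−1}. -/

import Mathlib

open Finset

/-- The Catalan number `Cat k = (1/(k+1)) * binom(2k, k)`, as a real number. -/
noncomputable def catalanR (k : ℕ) : ℝ := (1 / ((k : ℝ) + 1)) * (Nat.choose (2 * k) k : ℝ)

/-- The Narayana number `N(n,k) = (1/n) * binom(n,k) * binom(n,k-1)`, as a real number. -/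
noncomputable def narayanaR (n k : ℕ) : ℝ :=
  (1 / (n : ℝ)) * (Nat.choose n k : ℝ) * (Nat.choose n (k - 1) : ℝ)

/-- The Motzkin polynomial coefficient `M(n,k) = binom(n,2k) * Cat_k`, as a real number. -/
noncomputable def motzkinCoeffR (n k : ℕ) : ℝ := (Nat.choose n (2 * k) : ℝ) * catalanR k

private lemma trinom1 {n k p : ℕ} (hk : k ≤ n) (hp : p ≤ k) :
    n.choose (2*p) * (2*p).choose p * (n-2*p).choose (k-p)
      = n.choose k * k.choose p * (n-k).choose p := by
  rcases le_or_gt (p + k) n with h | h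
  · have h1 : n.choose (2*p) * (2*p).choose p = n.choose p * (n-p).choose p := by
      have := Nat.choose_mul (n := n) (show p ≤ 2*p by omega)
      rwa [show 2*p - p = p by omega] at this
    have h2 : n.choose k * k.choose p = n.choose p * (n-p).choose (k-p) :=
      Nat.choose_mul (n := n) hp
    have h3 : (n-p).choose k * k.choose p = (n-p).choose p * (n-2*p).choose (k-p) := by
      have := Nat.choose_mul (n := n-p) hp
      rwa [show n - p - p = n - 2*p by omega] at this
    have h4 : (n-p).choose k * k.choose p = (n-p).choose (k-p) * (n-k).choose p := by
      have := Nat.choose_mul (n := n-p) (show k - p ≤ k by omega)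
      rwa [show n - p - (k-p) = n - k by omega, show k - (k-p) = p by omega,
        Nat.choose_symm hp] at this
    calc n.choose (2*p) * (2*p).choose p * (n-2*p).choose (k-p)
        = n.choose p * ((n-p).choose p * (n-2*p).choose (k-p)) := by rw [h1]; ring
      _ = n.choose p * ((n-p).choose k * k.choose p) := by rw [h3]
      _ = n.choose p * ((n-p).choose (k-p) * (n-k).choose p) := by rw [h4]
      _ = n.choose k * k.choose p * (n-k).choose p := by rw [h2]; ring
  · have hr : (n-k).choose p = 0 := Nat.choose_eq_zero_of_lt (by omega)
    rcases le_or_gt (2*p) n with h2 | h2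
    · have : (n-2*p).choose (k-p) = 0 := Nat.choose_eq_zero_of_lt (by omega)
      simp [this, hr]
    · have : n.choose (2*p) = 0 := Nat.choose_eq_zero_of_lt (by omega)
      simp [this, hr]

private lemma trinom2 {n m q : ℕ} (h : m + 2 ≤ n) (hq : q ≤ m) :
    n.choose (2*q+2) * (2*q+2).choose (q+2) * (n-(2*q+2)).choose (m-q)
      = n.choose (m+2) * (m+2).choose (q+2) * (n-(m+2)).choose q := by
  rcases le_or_gt (q + m + 2) n with hin | hin
  · have h1 : n.choose (2*q+2) * (2*q+2).choose (q+2)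
        = n.choose (q+2) * (n-(q+2)).choose q := by
      have := Nat.choose_mul (n := n) (show q+2 ≤ 2*q+2 by omega)
      rwa [show 2*q+2 - (q+2) = q by omega] at this
    have h2 : n.choose (m+2) * (m+2).choose (q+2)
        = n.choose (q+2) * (n-(q+2)).choose (m-q) := by
      have := Nat.choose_mul (n := n) (show q+2 ≤ m+2 by omega)
      rwa [show m+2 - (q+2) = m - q by omega] at this
    have h3 : (n-(q+2)).choose m * m.choose q
        = (n-(q+2)).choose q * (n-(2*q+2)).choose (m-q) := by
      have := Nat.choose_mul (n := n-(q+2)) hq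
      rwa [show n-(q+2) - q = n - (2*q+2) by omega] at this
    have h4 : (n-(q+2)).choose m * m.choose q
        = (n-(q+2)).choose (m-q) * (n-(m+2)).choose q := by
      have := Nat.choose_mul (n := n-(q+2)) (show m - q ≤ m by omega)
      rwa [show n-(q+2) - (m-q) = n - (m+2) by omega, show m - (m-q) = q by omega,
        Nat.choose_symm hq] at this
    calc n.choose (2*q+2) * (2*q+2).choose (q+2) * (n-(2*q+2)).choose (m-q)
        = n.choose (q+2) * ((n-(q+2)).choose q * (n-(2*q+2)).choose (m-q)) := by rw [h1]; ring
      _ = n.choose (q+2) * ((n-(q+2)).choose m * m.choose q) := by rw [h3]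
      _ = n.choose (q+2) * ((n-(q+2)).choose (m-q) * (n-(m+2)).choose q) := by rw [h4]
      _ = n.choose (m+2) * (m+2).choose (q+2) * (n-(m+2)).choose q := by rw [h2]; ring
  · have hr : (n-(m+2)).choose q = 0 := Nat.choose_eq_zero_of_lt (by omega)
    rcases le_or_gt (2*q+2) n with h2 | h2
    · have : (n-(2*q+2)).choose (m-q) = 0 := Nat.choose_eq_zero_of_lt (by omega)
      simp [this, hr]
    · have : n.choose (2*q+2) = 0 := Nat.choose_eq_zero_of_lt (by omega)
      simp [this, hr]

private lemma vandermonde1 {n k : ℕ} (hk : k ≤ n) :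
    ∑ p ∈ range (k+1), k.choose p * (n-k).choose p = n.choose k := by
  have h : n.choose k = ∑ i ∈ range (k+1), k.choose i * (n-k).choose (k-i) := by
    conv_lhs => rw [show n = k + (n-k) by omega]
    rw [Nat.add_choose_eq, Finset.Nat.sum_antidiagonal_eq_sum_range_succ_mk]
  rw [h]
  conv_rhs => rw [← Finset.sum_range_reflect]
  apply Finset.sum_congr rfl
  intro i hi
  rw [mem_range] at hi
  rw [show k - (k + 1 - 1 - i) = i by omega, show k + 1 - 1 - i = k - i by omega,
    Nat.choose_symm (show i ≤ k by omega)]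

private lemma vandermonde2 {n m : ℕ} (h : m + 2 ≤ n) :
    ∑ q ∈ range (m+1), (m+2).choose (q+2) * (n-(m+2)).choose q = n.choose m := by
  have hrw : n.choose m = ∑ i ∈ range (m+1), (m+2).choose i * (n-(m+2)).choose (m-i) := by
    conv_lhs => rw [show n = (m+2) + (n-(m+2)) by omega]
    rw [Nat.add_choose_eq, Finset.Nat.sum_antidiagonal_eq_sum_range_succ_mk]
  rw [hrw]
  conv_rhs => rw [← Finset.sum_range_reflect]
  apply Finset.sum_congr rfl
  intro q hq
  rw [mem_range] at hq
  rw [show m - (m + 1 - 1 - q) = q by omega, show m + 1 - 1 - q = m - q by omega,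
    show (m+2).choose (q+2) = (m+2).choose (m-q) by
      rw [← Nat.choose_symm (show q+2 ≤ m+2 by omega), show m+2 - (q+2) = m - q by omega]]

private lemma sumA {n k : ℕ} (hk : k ≤ n) :
    ∑ p ∈ range (k+1), n.choose (2*p) * (2*p).choose p * (n-2*p).choose (k-p)
      = n.choose k * n.choose k := by
  have : ∑ p ∈ range (k+1), n.choose (2*p) * (2*p).choose p * (n-2*p).choose (k-p)
      = ∑ p ∈ range (k+1), n.choose k * (k.choose p * (n-k).choose p) := by
    apply Finset.sum_congr rfl
    intro p hp
    rw [mem_range] at hp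
    rw [trinom1 hk (by omega)]; ring
  rw [this, ← Finset.mul_sum, vandermonde1 hk]

private lemma sumB {n k : ℕ} (hk1 : 1 ≤ k) (hk : k ≤ n) :
    ∑ p ∈ range (k+1), n.choose (2*p) * (2*p).choose (p+1) * (n-2*p).choose (k-p)
      = n.choose (k+1) * n.choose (k-1) := by
  rcases le_or_gt (k+1) n with h | h
  · obtain ⟨m, rfl⟩ : ∃ m, k = m + 1 := ⟨k - 1, by omega⟩
    rw [Finset.sum_range_succ']
    simp only [Nat.mul_zero, Nat.choose_zero_right, Nat.zero_add]
    rw [show (0:ℕ).choose 1 = 0 from rfl]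
    simp only [Nat.mul_zero, Nat.zero_mul, Nat.mul_one, Nat.add_zero]
    have : ∑ q ∈ range (m+1),
        n.choose (2*(q+1)) * (2*(q+1)).choose (q+1+1) * (n-2*(q+1)).choose (m+1-(q+1))
        = ∑ q ∈ range (m+1), n.choose (m+2) * ((m+2).choose (q+2) * (n-(m+2)).choose q) := by
      apply Finset.sum_congr rfl
      intro q hq
      rw [mem_range] at hq
      rw [show 2*(q+1) = 2*q+2 by ring, show q+1+1 = q+2 from rfl,
        show m+1-(q+1) = m-q by omega, trinom2 (by omega) (by omega)]
      ring
    rw [this, ← Finset.mul_sum, vandermonde2 (by omega)]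
    rw [show m+1+1 = m+2 from rfl, show m+1-1 = m from rfl]
  · have hkn : k = n := by omega
    subst hkn
    rw [Nat.choose_eq_zero_of_lt (by omega), Nat.zero_mul]
    apply Finset.sum_eq_zero
    intro p hp
    rw [mem_range] at hp
    rcases Nat.eq_zero_or_pos p with rfl | hp1
    · simp
    · rcases le_or_gt (2*p) k with h2 | h2
      · rw [Nat.choose_eq_zero_of_lt (show k - 2*p < k - p by omega), Nat.mul_zero]
      · rw [Nat.choose_eq_zero_of_lt (by omega), Nat.zero_mul, Nat.zero_mul]

private lemma catalanR_eq (p : ℕ) :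
    catalanR p = ((2*p).choose p : ℝ) - ((2*p).choose (p+1) : ℝ) := by
  have h := Nat.choose_succ_right_eq (2*p) p
  rw [show 2*p - p = p by omega] at h
  have h' : ((2*p).choose (p+1) : ℝ) * ((p:ℝ) + 1) = ((2*p).choose p : ℝ) * (p:ℝ) := by
    exact_mod_cast congrArg (Nat.cast : ℕ → ℝ) h
  have hp : ((p:ℝ) + 1) ≠ 0 := by positivity
  rw [catalanR]
  field_simp
  linarith [h']

private lemma keyLemma {n k : ℕ} (hk : k ≤ n) :
    ∑ p ∈ range (k+1), motzkinCoeffR n p * ((n-2*p).choose (k-p) : ℝ)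
      = narayanaR (n+1) (k+1) := by
  have hsplit : ∑ p ∈ range (k+1), motzkinCoeffR n p * ((n-2*p).choose (k-p) : ℝ)
      = ((∑ p ∈ range (k+1), n.choose (2*p) * (2*p).choose p * (n-2*p).choose (k-p) : ℕ) : ℝ)
        - ((∑ p ∈ range (k+1),
            n.choose (2*p) * (2*p).choose (p+1) * (n-2*p).choose (k-p) : ℕ) : ℝ) := by
    push_cast
    rw [← Finset.sum_sub_distrib]
    apply Finset.sum_congr rfl
    intro p _
    rw [motzkinCoeffR, catalanR_eq]
    ring
  rw [hsplit, sumA hk]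
  rcases Nat.eq_zero_or_pos k with rfl | hk1
  · have hn1 : ((n:ℝ) + 1) ≠ 0 := by positivity
    simp only [Finset.sum_range_one, Nat.mul_zero, Nat.choose_zero_right, Nat.sub_zero,
      Nat.choose_self]
    norm_num [narayanaR, Nat.choose_one_right]
    field_simp
  · rw [sumB hk1 hk]
    -- now prove narayanaR (n+1) (k+1) = C(n,k)^2 - C(n,k+1)*C(n,k-1)
    have e1 : (n+1).choose (k+1) = n.choose k + n.choose (k+1) := Nat.choose_succ_succ n k
    have e2 : (n+1).choose k = n.choose (k-1) + n.choose k := by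
      have := Nat.choose_succ_succ n (k-1)
      simp only [Nat.succ_eq_add_one] at this
      rwa [show k - 1 + 1 = k by omega] at this
    have r1 : (n.choose (k+1) : ℝ) * ((k:ℝ)+1) = (n.choose k : ℝ) * ((n:ℝ) - (k:ℝ)) := by
      have h := Nat.choose_succ_right_eq n k
      have := congrArg (Nat.cast : ℕ → ℝ) h
      push_cast [Nat.cast_sub hk] at this
      linarith [this]
    have r2 : (n.choose k : ℝ) * (k:ℝ) = (n.choose (k-1) : ℝ) * ((n:ℝ) - (k:ℝ) + 1) := by
      have h := Nat.choose_succ_right_eq n (k-1)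
      rw [show k - 1 + 1 = k by omega] at h
      have := congrArg (Nat.cast : ℕ → ℝ) h
      push_cast [Nat.cast_sub (show k - 1 ≤ n by omega)] at this
      rw [Nat.cast_sub hk1] at this
      push_cast at this
      linarith [this]
    have hkk : ((k:ℝ) + 1) ≠ 0 := by positivity
    have hnk : ((n:ℝ) - (k:ℝ) + 1) ≠ 0 := by
      have : (k:ℝ) ≤ (n:ℝ) := by exact_mod_cast hk
      nlinarith
    have hn1 : ((n:ℝ) + 1) ≠ 0 := by positivity
    have hC : (n.choose (k+1) : ℝ) = (n.choose k : ℝ) * ((n:ℝ) - (k:ℝ)) / ((k:ℝ)+1) := by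
      field_simp; linarith [r1]
    have hA : (n.choose (k-1) : ℝ) = (n.choose k : ℝ) * (k:ℝ) / ((n:ℝ) - (k:ℝ) + 1) := by
      field_simp; linarith [r2]
    rw [narayanaR, show k + 1 - 1 = k from rfl, e1, e2]
    push_cast
    rw [hC, hA]
    field_simp
    ring

theorem stmt0 (ℓ : ℕ) (hℓ : 1 ≤ ℓ) (x y : ℝ) :
    y * ∑ h ∈ Finset.Icc 1 ℓ, narayanaR ℓ h * (x * y) ^ h * (1 + y) ^ (2 * ℓ - h)
      = x * y ^ 2 * (1 + y) *
        ∑ p ∈ Finset.range ((ℓ - 1) / 2 + 1),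
          motzkinCoeffR (ℓ - 1) p * (x * y * (1 + y) ^ 3) ^ p *
            ((1 + y) * (1 + y + x * y)) ^ (ℓ - 2 * p - 1) := by
  obtain ⟨n, rfl⟩ : ∃ n, ℓ = n + 1 := ⟨ℓ - 1, by omega⟩
  simp only [Nat.add_sub_cancel]
  have hexpo : ∀ p : ℕ, n + 1 - 2*p - 1 = n - 2*p := fun p => by omega
  simp only [hexpo]
  -- LHS to sum over range (n+1)
  have hL : y * ∑ h ∈ Finset.Icc 1 (n+1), narayanaR (n+1) h * (x * y) ^ h * (1 + y) ^ (2 * (n+1) - h)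
      = ∑ k ∈ range (n+1),
          x * y^2 * (1+y) * (narayanaR (n+1) (k+1) * (x*y)^k * (1+y)^(2*n-k)) := by
    rw [← Finset.Ico_add_one_right_eq_Icc, Finset.sum_Ico_eq_sum_range,
      show n + 1 + 1 - 1 = n + 1 by omega, Finset.mul_sum]
    apply Finset.sum_congr rfl
    intro k hk
    rw [mem_range] at hk
    rw [show 2 * (n+1) - (1+k) = (2*n-k) + 1 by omega, show 1 + k = k + 1 by omega,
      pow_succ, pow_succ]
    ring
  rw [hL]
  -- RHS: expand each term with binomial theorem
  have hexp : ∀ p ∈ range (n/2 + 1),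
      motzkinCoeffR n p * (x * y * (1 + y) ^ 3) ^ p * ((1 + y) * (1 + y + x * y)) ^ (n - 2*p)
        = ∑ k ∈ Finset.Ico p (n + 1),
            motzkinCoeffR n p * ((n-2*p).choose (k-p) : ℝ) * (x*y)^k * (1+y)^(2*n-k) := by
    intro p hp
    rw [mem_range] at hp
    have h2p : 2*p ≤ n := by omega
    have heq : ((1:ℝ) + y + x * y) = x*y + (1+y) := by ring
    have hbin : (x*y + ((1:ℝ)+y))^(n - 2*p)
        = ∑ j ∈ range (n - 2*p + 1), (x*y)^j * (1+y)^(n-2*p-j) * ((n-2*p).choose j : ℝ) :=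
      add_pow _ _ _
    have hmp1 : (x*y*(1+y)^3)^p = (x*y)^p * (((1:ℝ)+y)^3)^p := mul_pow _ _ _
    have hmp2 : (((1:ℝ)+y)*(x*y+(1+y)))^(n-2*p)
        = ((1:ℝ)+y)^(n-2*p) * (x*y+((1:ℝ)+y))^(n-2*p) := mul_pow _ _ _
    rw [heq, hmp1, hmp2, hbin, Finset.mul_sum, Finset.mul_sum]
    have hIco : ∑ k ∈ Finset.Ico p (n + 1),
        motzkinCoeffR n p * ((n-2*p).choose (k-p) : ℝ) * (x*y)^k * (1+y)^(2*n-k)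
        = ∑ k ∈ Finset.Ico p (n - p + 1),
            motzkinCoeffR n p * ((n-2*p).choose (k-p) : ℝ) * (x*y)^k * (1+y)^(2*n-k) := by
      symm
      apply Finset.sum_subset
      · apply Finset.Ico_subset_Ico le_rfl; omega
      · intro k hk hk'
        rw [Finset.mem_Ico] at hk hk'
        have : n - 2*p < k - p := by omega
        rw [Nat.choose_eq_zero_of_lt this]
        push_cast; ring
    rw [hIco, Finset.sum_Ico_eq_sum_range, show n - p + 1 - p = n - 2*p + 1 by omega]
    apply Finset.sum_congr rfl
    intro j hj
    rw [mem_range] at hj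
    rw [show p + j - p = j by omega]
    rw [show 2*n - (p+j) = 3*p + ((n-2*p) + (n-2*p-j)) by omega,
      ← pow_mul, show 3*p = p*3 by ring]
    ring
  rw [Finset.sum_congr rfl hexp]
  -- extend outer range and swap
  have hext : ∑ p ∈ range (n/2 + 1), ∑ k ∈ Finset.Ico p (n + 1),
        motzkinCoeffR n p * ((n-2*p).choose (k-p) : ℝ) * (x*y)^k * (1+y)^(2*n-k)
      = ∑ p ∈ range (n + 1), ∑ k ∈ Finset.Ico p (n + 1),
        motzkinCoeffR n p * ((n-2*p).choose (k-p) : ℝ) * (x*y)^k * (1+y)^(2*n-k) := by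
    apply Finset.sum_subset
    · apply Finset.range_subset_range.2; omega
    · intro p hp hp'
      rw [mem_range] at hp hp'
      apply Finset.sum_eq_zero
      intro k _
      have : n < 2*p := by omega
      rw [motzkinCoeffR, Nat.choose_eq_zero_of_lt this]
      push_cast; ring
  rw [hext, Finset.range_eq_Ico, Finset.sum_Ico_Ico_comm]
  rw [Finset.mul_sum]
  apply Finset.sum_congr rfl
  intro k hk
  rw [Finset.mem_Ico] at hk
  rw [← Finset.range_eq_Ico]
  have : ∑ p ∈ range (k + 1),
      motzkinCoeffR n p * ((n-2*p).choose (k-p) : ℝ) * (x*y)^k * (1+y)^(2*n-k)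
      = (∑ p ∈ range (k + 1), motzkinCoeffR n p * ((n-2*p).choose (k-p) : ℝ))
          * ((x*y)^k * (1+y)^(2*n-k)) := by
    rw [Finset.sum_mul]
    apply Finset.sum_congr rfl
    intro p _
    ring
  rw [this, keyLemma (show k ≤ n by omega)]
  ring
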